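/- arXiv:2101.02180 — 6 statements merged into one kernel-verified Lean document; each statement's English description precedes it below -/
import Mathlib

section
/- (Weak duality between (REG) and (DCREG).) Let G be a simple graph on n vertices with adjacency matrix A and let C > 0. For every strictly feasible matrix M for (REG) and every symmetric positive semidefinite matrix Q with Q_ii = C for all i, one has ℒ_{A,C}(M) ≤ Σ_{(i,j): i∼j} g₁(Q_ij) + Σ_{(i,j): i≠j, i≁j} g₂(Q_ij), where g₁(q) := q if q ≥ −1 and g₁(q) := −1 − log(−q) if q < −1, and g₂(q) := q − log q − 1 if q ≥ 1 and g₂(q) := 0 if q < 1, with both sums taken over ordered pairs. -/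
open Finset

/-- Bernoulli log-likelihood, summed over ordered pairs `i ≠ j`. -/
noncomputable def bernLL {n : ℕ} (A M : Matrix (Fin n) (Fin n) ℝ) : ℝ :=
  ∑ i, ∑ j, if i ≠ j then A i j * Real.log (M i j) + (1 - A i j) * Real.log (1 - M i j) else 0

/-- Regularized log-likelihood `ℒ_{A,C}` of (REG). -/
noncomputable def regLL {n : ℕ} (A : Matrix (Fin n) (Fin n) ℝ) (C : ℝ)
    (M : Matrix (Fin n) (Fin n) ℝ) : ℝ :=
  bernLL A M - C * M.trace

/-- Strict feasibility for (REG). -/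
def StrictFeasible {n : ℕ} (A M : Matrix (Fin n) (Fin n) ℝ) : Prop :=
  M.PosSemidef ∧ (∀ i j, i ≠ j → 0 ≤ M i j ∧ M i j ≤ 1) ∧
    (∀ i j, A i j = 1 → 0 < M i j) ∧ (∀ i j, i ≠ j → A i j = 0 → M i j < 1)

/-- Edge term of the dual objective (DCREG). -/
noncomputable def g₁ (q : ℝ) : ℝ := if -1 ≤ q then q else -1 - Real.log (-q)

/-- Non-edge term of the dual objective (DCREG). -/
noncomputable def g₂ (q : ℝ) : ℝ := if 1 ≤ q then q - Real.log q - 1 else 0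

lemma log_add_le_g₁ (q m : ℝ) (hm0 : 0 < m) (hm1 : m ≤ 1) :
    Real.log m + q * m ≤ g₁ q := by
  unfold g₁; split_ifs with h
  · have h2 := Real.log_le_sub_one_of_pos hm0
    nlinarith
  · push_neg at h
    have hq : 0 < -q := by linarith
    have h2 := Real.log_le_sub_one_of_pos (mul_pos hq hm0)
    rw [Real.log_mul (ne_of_gt hq) (ne_of_gt hm0)] at h2
    linarith

lemma log_add_le_g₂ (q m : ℝ) (hm0 : 0 ≤ m) (hm1 : m < 1) :
    Real.log (1 - m) + q * m ≤ g₂ q := by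
  unfold g₂; split_ifs with h
  · have hq : 0 < q := by linarith
    have h2 := Real.log_le_sub_one_of_pos (mul_pos hq (by linarith : (0:ℝ) < 1 - m))
    rw [Real.log_mul (ne_of_gt hq) (by linarith)] at h2
    nlinarith
  · push_neg at h
    have h2 := Real.log_le_sub_one_of_pos (by linarith : (0:ℝ) < 1 - m)
    nlinarith

lemma inner_psd_nonneg {n : ℕ} (Q M : Matrix (Fin n) (Fin n) ℝ)
    (hQ : Q.PosSemidef) (hM : M.PosSemidef) :
    0 ≤ ∑ i, ∑ j, Q i j * M i j := by
  open scoped MatrixOrder in obtain ⟨B, hB⟩ := CStarAlgebra.nonneg_iff_eq_star_mul_self.mp hM.nonneg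
  rw [Matrix.star_eq_conjTranspose] at hB
  subst hB
  have key : ∀ x : Fin n → ℝ, 0 ≤ ∑ i, ∑ j, x i * (Q i j * x j) := by
    intro x
    have h := hQ.dotProduct_mulVec_nonneg x
    simpa [dotProduct, Matrix.mulVec, Finset.mul_sum] using h
  have expand : ∑ i, ∑ j, Q i j * (B.conjTranspose * B) i j
      = ∑ k, ∑ i, ∑ j, B k i * (Q i j * B k j) := by
    calc ∑ i, ∑ j, Q i j * (B.conjTranspose * B) i j
        = ∑ i, ∑ j, ∑ k, B k i * (Q i j * B k j) := by
          refine Finset.sum_congr rfl fun i _ => Finset.sum_congr rfl fun j _ => ?_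
          simp only [Matrix.mul_apply, Matrix.conjTranspose_apply, star_trivial,
            Finset.mul_sum]
          exact Finset.sum_congr rfl fun k _ => by ring
      _ = ∑ i, ∑ k, ∑ j, B k i * (Q i j * B k j) :=
          Finset.sum_congr rfl fun i _ => Finset.sum_comm
      _ = ∑ k, ∑ i, ∑ j, B k i * (Q i j * B k j) := Finset.sum_comm
  rw [expand]
  exact Finset.sum_nonneg fun k _ => key _

/-- Weak duality between (REG) and (DCREG). -/
theorem weak_duality_REG_DCREG (n : ℕ) (A : Matrix (Fin n) (Fin n) ℝ)
    (hsym : A.IsSymm) (hdiag : ∀ i, A i i = 0)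
    (h01 : ∀ i j, A i j = 0 ∨ A i j = 1)
    (C : ℝ) (hC : 0 < C)
    (M : Matrix (Fin n) (Fin n) ℝ) (hM : StrictFeasible A M)
    (Q : Matrix (Fin n) (Fin n) ℝ) (hQsym : Q.IsSymm) (hQ : Q.PosSemidef)
    (hQdiag : ∀ i, Q i i = C) :
    regLL A C M ≤
      (∑ i, ∑ j, if A i j = 1 then g₁ (Q i j) else 0) +
      (∑ i, ∑ j, if i ≠ j ∧ A i j = 0 then g₂ (Q i j) else 0) := by
  obtain ⟨hMpsd, hM01, hMpos, hMlt⟩ := hM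
  -- split the inner product into diagonal and off-diagonal parts
  have hsplit : ∑ i, ∑ j, Q i j * M i j
      = C * M.trace + ∑ i, ∑ j, (if i ≠ j then Q i j * M i j else 0) := by
    have h1 : ∀ i : Fin n, ∑ j, (if i ≠ j then Q i j * M i j else 0)
        = (∑ j, Q i j * M i j) - Q i i * M i i := by
      intro i
      have h2 : ∑ j, (if i = j then Q i j * M i j else 0) = Q i i * M i i := by simp
      rw [← h2, ← Finset.sum_sub_distrib]
      refine Finset.sum_congr rfl fun j _ => ?_
      by_cases h : i = j <;> simp [h]
    simp only [h1, Finset.sum_sub_distrib]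
    have : ∑ i, Q i i * M i i = C * M.trace := by
      simp [Matrix.trace, Matrix.diag, Finset.mul_sum, hQdiag]
    rw [this]; ring
  have hnonneg := inner_psd_nonneg Q M hQ hMpsd
  have step1 : regLL A C M ≤ ∑ i, ∑ j, (if i ≠ j then
      A i j * Real.log (M i j) + (1 - A i j) * Real.log (1 - M i j) + Q i j * M i j else 0) := by
    have heq : ∑ i, ∑ j, (if i ≠ j then
        A i j * Real.log (M i j) + (1 - A i j) * Real.log (1 - M i j) + Q i j * M i j else 0)
        = bernLL A M + ∑ i, ∑ j, (if i ≠ j then Q i j * M i j else 0) := by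
      unfold bernLL
      rw [← Finset.sum_add_distrib]
      refine Finset.sum_congr rfl fun i _ => ?_
      rw [← Finset.sum_add_distrib]
      refine Finset.sum_congr rfl fun j _ => ?_
      by_cases h : i = j <;> simp [h]
    rw [heq]
    unfold regLL
    have : 0 ≤ C * M.trace + ∑ i, ∑ j, (if i ≠ j then Q i j * M i j else 0) := by
      rw [← hsplit]; exact hnonneg
    linarith
  refine step1.trans ?_
  rw [← Finset.sum_add_distrib]
  refine Finset.sum_le_sum fun i _ => ?_
  rw [← Finset.sum_add_distrib]
  refine Finset.sum_le_sum fun j _ => ?_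
  by_cases hij : i = j
  · subst hij
    simp [hdiag i]
  · rcases h01 i j with hA | hA
    · rw [hA, if_pos hij, if_neg (by norm_num : ¬(0:ℝ) = 1), if_pos ⟨hij, rfl⟩]
      have hle := log_add_le_g₂ (Q i j) (M i j) (hM01 i j hij).1 (hMlt i j hij hA)
      simp only [zero_mul, sub_zero, one_mul, zero_add]
      linarith
    · rw [hA, if_pos hij, if_pos rfl, if_neg (by norm_num : ¬(i ≠ j ∧ (1:ℝ) = 0))]
      have hle := log_add_le_g₁ (Q i j) (M i j) (hMpos i j hA) (hM01 i j hij).2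
      simp only [one_mul, sub_self, zero_mul, add_zero]
      linarith
end

section
/- Let G be a simple graph on n vertices with adjacency matrix A, degrees d_i, and suppose symmetric matrices P, Q ∈ ℝ^{n×n} satisfy the primal–dual optimality conditions for (REG) with parameter C, where C ≥ 1 and C > max_i d_i. Then: (i) for every non-adjacent pair i ≠ j, Q_ij ≤ C/(C − √(d_i·d_j)); and (ii) for every vertex i, P_ii ≥ d_i/C − Σ_{j: j≠i, j≁i} √(d_i·d_j) / (C·(C − √(d_i·d_j))). -/
open Finset

lemma psd_diag_nonneg {n : ℕ} {M : Matrix (Fin n) (Fin n) ℝ} (hM : M.PosSemidef) (i : Fin n) :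
    0 ≤ M i i := by
  have h := hM.dotProduct_mulVec_nonneg (Pi.single i 1)
  simpa [dotProduct, Matrix.mulVec, Pi.single_apply, Finset.sum_ite_eq,
    Finset.sum_ite_eq'] using h

lemma psd_entry_sq_le {n : ℕ} {M : Matrix (Fin n) (Fin n) ℝ} (hM : M.PosSemidef)
    {i j : Fin n} (hij : i ≠ j) : (M i j) ^ 2 ≤ M i i * M j j := by
  have hsymm : M j i = M i j := by
    have := hM.1.apply j i
    simpa using this.symm
  have key : ∀ t : ℝ, 0 ≤ M i i * (t * t) + (2 * M i j) * t + M j j := by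
    intro t
    have h := hM.dotProduct_mulVec_nonneg (fun k => t * (if k = i then 1 else 0) + (if k = j then 1 else 0))
    simp only [dotProduct, Matrix.mulVec, RCLike.re_to_real, star_trivial] at h
    simp only [mul_ite, ite_mul, mul_one, mul_zero, one_mul, zero_mul, mul_add, add_mul,
      Finset.sum_add_distrib, Finset.sum_ite_eq, Finset.sum_ite_eq', Finset.mem_univ,
      if_true, hij, hij.symm, hsymm] at h
    nlinarith [h]
  have hd := discrim_le_zero key
  rw [discrim] at hd
  nlinarith [hd]

/-- Primal–dual optimality (KKT) conditions for (REG) with parameter `C`, for a graph with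
adjacency matrix `A`. -/
def KKTConditions {n : ℕ} (A P Q : Matrix (Fin n) (Fin n) ℝ) (C : ℝ) : Prop :=
  P.PosSemidef ∧ Q.PosSemidef ∧ P * Q = 0 ∧ (∀ i, Q i i = C) ∧
  (∀ i j, i ≠ j → 0 ≤ P i j ∧ P i j ≤ 1) ∧
  (∀ i j, A i j = 1 → (Q i j ≤ -1 ∧ P i j * Q i j = -1) ∨ (-1 ≤ Q i j ∧ P i j = 1)) ∧
  (∀ i j, i ≠ j → A i j = 0 → (Q i j ≤ 1 ∧ P i j = 0) ∨ (1 ≤ Q i j ∧ Q i j * (1 - P i j) = 1))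

/-- Bounds in the regime `C > max_i d_i`: dual non-edge entries are at most
`C/(C - √(dᵢdⱼ))` and diagonal primal entries admit the stated lower bound. -/
theorem large_C_bounds_of_KKT (n : ℕ) (A P Q : Matrix (Fin n) (Fin n) ℝ)
    (hsym : A.IsSymm) (hdiag : ∀ i, A i i = 0)
    (h01 : ∀ i j, A i j = 0 ∨ A i j = 1)
    (hPsym : P.IsSymm) (hQsym : Q.IsSymm)
    (d : Fin n → ℝ) (hd : ∀ i, d i = ∑ j, A i j)
    (C : ℝ) (hC : 1 ≤ C) (hCd : ∀ i, d i < C)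
    (hKKT : KKTConditions A P Q C) :
    (∀ i j, i ≠ j → A i j = 0 → Q i j ≤ C / (C - Real.sqrt (d i * d j))) ∧
    (∀ i, d i / C -
        ∑ j ∈ univ.filter (fun j => j ≠ i ∧ A i j = 0),
          Real.sqrt (d i * d j) / (C * (C - Real.sqrt (d i * d j))) ≤ P i i) := by
  classical
  obtain ⟨hPpsd, hQpsd, hPQ, hQdiag, hP01, hEdge, hNonedge⟩ := hKKT
  have hC0 : (0:ℝ) < C := lt_of_lt_of_le one_pos hC
  have hdnn : ∀ i, 0 ≤ d i := by
    intro i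
    rw [hd i]
    refine Finset.sum_nonneg fun j _ => ?_
    rcases h01 i j with h | h <;> simp [h]
  have hslt : ∀ i j, Real.sqrt (d i * d j) < C := by
    intro i j
    have h1 : d i * d j < C ^ 2 := by nlinarith [hdnn i, hdnn j, hCd i, hCd j]
    have h2 := Real.sqrt_lt_sqrt (mul_nonneg (hdnn i) (hdnn j)) h1
    rwa [Real.sqrt_sq hC0.le] at h2
  have hsnn : ∀ i j, 0 ≤ Real.sqrt (d i * d j) := fun i j => Real.sqrt_nonneg _
  -- key identity from complementary slackness
  have hkey : ∀ i, P i i * C = - ∑ k ∈ univ.erase i, P i k * Q i k := by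
    intro i
    have h0 : (P * Q) i i = 0 := by rw [hPQ]; rfl
    rw [Matrix.mul_apply] at h0
    have h0' : ∑ k, P i k * Q i k = 0 := by
      rw [← h0]
      exact Finset.sum_congr rfl fun k _ => by rw [hQsym.apply i k]
    have hsplit := Finset.sum_erase_add Finset.univ (fun k => P i k * Q i k) (Finset.mem_univ i)
    have hsplit' : ∑ k ∈ univ.erase i, P i k * Q i k + P i i * C = 0 := by
      rw [h0'] at hsplit
      simpa [hQdiag i] using hsplit
    linarith
  have hPdnn : ∀ i, 0 ≤ P i i := fun i => psd_diag_nonneg hPpsd i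
  -- each off-diagonal term bound used for `P i i ≤ d i / C`
  have htermA : ∀ i k, k ≠ i → -(P i k * Q i k) ≤ A i k := by
    intro i k hk
    rcases h01 i k with h0 | h1
    · rcases hNonedge i k (Ne.symm hk) h0 with ⟨_, hP0⟩ | ⟨hQ1, heq⟩
      · simp [hP0, h0]
      · rw [h0]; nlinarith [heq, hQ1]
    · rcases hEdge i k h1 with ⟨_, heq⟩ | ⟨hQ1, hP1⟩
      · rw [h1]; linarith [heq]
      · rw [h1, hP1]; linarith [hQ1]
  have hA : ∀ i, P i i * C ≤ d i := by
    intro i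
    have h1 : - ∑ k ∈ univ.erase i, P i k * Q i k ≤ ∑ k ∈ univ.erase i, A i k := by
      rw [← Finset.sum_neg_distrib]
      exact Finset.sum_le_sum fun k hk => htermA i k (Finset.ne_of_mem_erase hk)
    have hsum : ∑ k ∈ univ.erase i, A i k = d i := by
      rw [hd i]
      exact Finset.sum_erase _ (hdiag i)
    rw [hkey i]
    linarith
  have hPoff : ∀ i j, i ≠ j → P i j * C ≤ Real.sqrt (d i * d j) := by
    intro i j hij
    have h1 := psd_entry_sq_le hPpsd hij
    have hp0 : 0 ≤ P i j := (hP01 i j hij).1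
    have hsq : Real.sqrt (d i * d j) ^ 2 = d i * d j :=
      Real.sq_sqrt (mul_nonneg (hdnn i) (hdnn j))
    have e1 : (P i j * C) ^ 2 ≤ (P i i * C) * (P j j * C) := by
      nlinarith [mul_le_mul_of_nonneg_right h1 (sq_nonneg C)]
    have e2 : (P i i * C) * (P j j * C) ≤ d i * d j :=
      mul_le_mul (hA i) (hA j) (mul_nonneg (hPdnn j) hC0.le) (hdnn i)
    have e3 : (P i j * C) ^ 2 ≤ Real.sqrt (d i * d j) ^ 2 := by rw [hsq]; linarith
    calc P i j * C = Real.sqrt ((P i j * C) ^ 2) :=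
          (Real.sqrt_sq (mul_nonneg hp0 hC0.le)).symm
      _ ≤ Real.sqrt (Real.sqrt (d i * d j) ^ 2) := Real.sqrt_le_sqrt e3
      _ = Real.sqrt (d i * d j) := Real.sqrt_sq (hsnn i j)
  have hQbound : ∀ i j, i ≠ j → A i j = 0 → Q i j ≤ C / (C - Real.sqrt (d i * d j)) := by
    intro i j hij h0
    have hcs : 0 < C - Real.sqrt (d i * d j) := sub_pos.mpr (hslt i j)
    rcases hNonedge i j hij h0 with ⟨hQ1, _⟩ | ⟨hQ1, heq⟩
    · have : (1:ℝ) ≤ C / (C - Real.sqrt (d i * d j)) := by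
        rw [le_div_iff₀ hcs]
        linarith [hsnn i j]
      linarith
    · rw [le_div_iff₀ hcs]
      have hq0 : (0:ℝ) ≤ Q i j := by linarith
      have hkey2 : 0 ≤ Q i j * (C * (1 - P i j) - (C - Real.sqrt (d i * d j))) :=
        mul_nonneg hq0 (by nlinarith [hPoff i j hij])
      have h3 : Q i j * (1 - P i j) * C = C := by rw [heq]; ring
      nlinarith [hkey2, h3]
  have hEdgeEq : ∀ i k, A i k = 1 → P i k * Q i k = -1 := by
    intro i k h1
    have hik : i ≠ k := by
      intro h
      rw [h, hdiag k] at h1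
      norm_num at h1
    rcases hEdge i k h1 with ⟨_, heq⟩ | ⟨_, hP1⟩
    · exact heq
    · exfalso
      have h2 := psd_entry_sq_le hPpsd hik
      rw [hP1] at h2
      nlinarith [hA i, hA k, hPdnn i, hPdnn k, hCd i, hCd k, hdnn i, hdnn k, hC0,
        mul_le_mul (hA i) (hA k) (mul_nonneg (hPdnn k) hC0.le) (hdnn i)]
  refine ⟨hQbound, ?_⟩
  intro i
  set g : Fin n → ℝ := fun k =>
    if A i k = 0 then Real.sqrt (d i * d k) / (C - Real.sqrt (d i * d k)) else 0 with hg
  have hterm2 : ∀ k ∈ univ.erase i, A i k - g k ≤ -(P i k * Q i k) := by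
    intro k hk
    have hki : k ≠ i := Finset.ne_of_mem_erase hk
    rcases h01 i k with h0 | h1
    · have hcs : 0 < C - Real.sqrt (d i * d k) := sub_pos.mpr (hslt i k)
      have hgk : g k = Real.sqrt (d i * d k) / (C - Real.sqrt (d i * d k)) := by
        rw [hg]; simp [h0]
      rcases hNonedge i k (Ne.symm hki) h0 with ⟨_, hP0⟩ | ⟨hQ1, heq⟩
      · have hgnn : 0 ≤ g k := by rw [hgk]; positivity
        rw [hP0, h0]
        linarith
      · have hQb := hQbound i k (Ne.symm hki) h0
        have hPQ' : P i k * Q i k = Q i k - 1 := by linear_combination -heq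
        have hdd : C / (C - Real.sqrt (d i * d k)) - 1
            = Real.sqrt (d i * d k) / (C - Real.sqrt (d i * d k)) := by
          field_simp
          ring
        rw [h0, hgk, hPQ']
        linarith
    · have hgk : g k = 0 := by rw [hg]; simp [h1]
      rw [h1, hgk, hEdgeEq i k h1]
      norm_num
  have hsum1 : ∑ k ∈ univ.erase i, (A i k - g k) ≤ ∑ k ∈ univ.erase i, -(P i k * Q i k) :=
    Finset.sum_le_sum hterm2
  have hsA : ∑ k ∈ univ.erase i, A i k = d i := by
    rw [hd i]
    exact Finset.sum_erase _ (hdiag i)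
  have hsg : ∑ k ∈ univ.erase i, g k
      = ∑ j ∈ univ.filter (fun j => j ≠ i ∧ A i j = 0),
          Real.sqrt (d i * d j) / (C - Real.sqrt (d i * d j)) := by
    have hset : (univ.erase i).filter (fun k => A i k = 0)
        = univ.filter (fun j => j ≠ i ∧ A i j = 0) := by
      ext k
      simp [Finset.mem_erase, Finset.mem_filter, and_comm]
    rw [← hset, Finset.sum_filter]
  have hsplit2 : ∑ k ∈ univ.erase i, (A i k - g k)
      = d i - ∑ k ∈ univ.erase i, g k := by
    rw [Finset.sum_sub_distrib, hsA]
  have hneg : ∑ k ∈ univ.erase i, -(P i k * Q i k)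
      = - ∑ k ∈ univ.erase i, (P i k * Q i k) := Finset.sum_neg_distrib _
  have hfin : d i - ∑ k ∈ univ.erase i, g k ≤ P i i * C := by
    rw [hkey i]
    linarith [hsum1, hsplit2, hneg]
  have hsumdiv : ∑ j ∈ univ.filter (fun j => j ≠ i ∧ A i j = 0),
        Real.sqrt (d i * d j) / (C * (C - Real.sqrt (d i * d j)))
      = (∑ j ∈ univ.filter (fun j => j ≠ i ∧ A i j = 0),
          Real.sqrt (d i * d j) / (C - Real.sqrt (d i * d j))) / C := by
    rw [Finset.sum_div]
    refine Finset.sum_congr rfl fun j _ => ?_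
    rw [div_div, mul_comm C]
  rw [hsumdiv, ← hsg, div_sub_div_same, div_le_iff₀ hC0]
  linarith [hfin]
end

section
/- (Tightness of the rank bound.) Let n = 2k be even and let G be the perfect matching graph on n vertices (the disjoint union of k edges, so each vertex is adjacent to exactly one other vertex), with adjacency matrix A. Let C ≥ 1 and define the symmetric matrix P* by P*_ii = 1/C for all i, P*_ij = 1/C whenever i∼j, and P*_ij = 0 for all other pairs i ≠ j. Then P* is strictly feasible for (REG), P* is an optimal solution of (REG) with parameter C (i.e., ℒ_{A,C}(P*) ≥ ℒ_{A,C}(M) for every strictly feasible M), and rank(P*) = n/2. -/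
open Finset

theorem matching_sigma {n : ℕ} (A : Matrix (Fin n) (Fin n) ℝ)
    (hsym : A.IsSymm) (hdiag : ∀ i, A i i = 0)
    (h01 : ∀ i j, A i j = 0 ∨ A i j = 1)
    (hmatch : ∀ i, ∑ j, A i j = 1) :
    ∃ σ : Fin n → Fin n, (∀ i j, A i j = if j = σ i then 1 else 0) ∧
      (∀ i, σ (σ i) = i) ∧ (∀ i, σ i ≠ i) := by
  have hcard : ∀ i, (Finset.univ.filter (fun j => A i j = 1)).card = 1 := by
    intro i
    have h1 : ((Finset.univ.filter (fun j => A i j = 1)).card : ℝ) = 1 := by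
      have he : ∑ j, A i j = ∑ j, if A i j = 1 then (1:ℝ) else 0 := by
        refine Finset.sum_congr rfl fun j _ => ?_
        rcases h01 i j with h | h <;> simp [h]
      rw [Finset.card_filter]
      push_cast
      rw [← he, hmatch i]
    exact_mod_cast h1
  choose σ hσ using fun i => Finset.card_eq_one.mp (hcard i)
  have hchar : ∀ i j, A i j = 1 ↔ j = σ i := by
    intro i j
    constructor
    · intro h
      have : j ∈ Finset.univ.filter (fun j => A i j = 1) := by simp [h]
      rw [hσ i] at this; simpa using this
    · rintro rfl
      have : σ i ∈ Finset.univ.filter (fun j => A i j = 1) := by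
        rw [hσ i]; simp
      simpa using this
  refine ⟨σ, fun i j => ?_, fun i => ?_, fun i => ?_⟩
  · by_cases h : j = σ i
    · simp [h, (hchar i (σ i)).mpr rfl]
    · rcases h01 i j with h' | h'
      · simp [h, h']
      · exact absurd ((hchar i j).mp h') h
  · have h1 : A (σ i) i = 1 := by rw [hsym.apply]; exact (hchar i (σ i)).mpr rfl
    exact ((hchar (σ i) i).mp h1).symm
  · intro h
    have := (hchar i (σ i)).mpr rfl
    rw [h, hdiag i] at this
    norm_num at this

open Matrix in
theorem rank_matching {n k : ℕ} (hn : n = 2*k) (σ : Fin n → Fin n)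
    (hinv : ∀ i, σ (σ i) = i) (hne : ∀ i, σ i ≠ i)
    (N : Matrix (Fin n) (Fin n) ℝ)
    (hN : ∀ i j, N i j = if i = j then 1 else if i = σ j then 1 else 0) :
    N.rank = k := by
  set v : {j : Fin n // j < σ j} → (Fin n → ℝ) :=
    fun j => Pi.single j.1 1 + Pi.single (σ j.1) 1 with hv
  have hcol : ∀ j : Fin n, Nᵀ j = Pi.single j 1 + Pi.single (σ j) 1 := by
    intro j; funext i
    have : Nᵀ j i = N i j := rfl
    rw [this, hN]
    simp only [Pi.add_apply, Pi.single_apply]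
    rcases eq_or_ne i j with rfl | h
    · have hne' : i ≠ σ i := fun hh => hne i hh.symm
      simp [Pi.single_apply, hne']
    · rcases eq_or_ne i (σ j) with rfl | h2
      · simp [Pi.single_apply, h]
      · simp [Pi.single_apply, h, h2]
  have hrange : Set.range Nᵀ = Set.range v := by
    ext x
    constructor
    · rintro ⟨j, rfl⟩
      rcases (hne j).lt_or_gt with h | h
      · refine ⟨⟨σ j, ?_⟩, ?_⟩
        · rw [hinv]; exact h
        · rw [hv]; simp only; rw [hinv, hcol j, add_comm]
      · exact ⟨⟨j, h⟩, (hcol j).symm⟩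
    · rintro ⟨j, rfl⟩
      exact ⟨j.1, hcol j.1⟩
  have hvval : ∀ i j : {j : Fin n // j < σ j}, v i j.1 = if j = i then 1 else 0 := by
    intro i j
    have h2 : j.1 ≠ σ i.1 := by
      intro h
      have hji : σ j.1 = i.1 := by rw [h, hinv]
      have ha : j.1 < i.1 := hji ▸ j.2
      have hb : i.1 < j.1 := by have hi2 := i.2; rw [← h] at hi2; exact hi2
      exact lt_asymm ha hb
    rcases eq_or_ne j i with rfl | h
    · simp [hv, Pi.single_apply, (hne j.1).symm]
    · have h1 : j.1 ≠ i.1 := fun hh => h (Subtype.ext hh)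
      simp [hv, Pi.single_apply, h1, h2, h]
  have hLI : LinearIndependent ℝ v := by
    rw [Fintype.linearIndependent_iff]
    intro g hg j
    have := congrFun hg j.1
    simp only [Finset.sum_apply, Pi.smul_apply, smul_eq_mul, Pi.zero_apply] at this
    rw [Finset.sum_congr rfl (fun i _ => by rw [hvval i j])] at this
    simpa using this
  have hcard : Fintype.card {j : Fin n // j < σ j} = k := by
    have e : {j : Fin n // j < σ j} ≃ {j : Fin n // ¬ j < σ j} :=
      { toFun := fun j => ⟨σ j.1, by rw [hinv]; exact not_lt.mpr j.2.le⟩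
        invFun := fun j => ⟨σ j.1, by
          rw [hinv]
          exact lt_of_le_of_ne (not_lt.mp j.2) (hne j.1)⟩
        left_inv := fun j => Subtype.ext (hinv j.1)
        right_inv := fun j => Subtype.ext (hinv j.1) }
    have h1 : Fintype.card {j : Fin n // j < σ j} + Fintype.card {j : Fin n // ¬ j < σ j}
        = n := by
      rw [Fintype.card_subtype, Fintype.card_subtype, ← Finset.card_union_of_disjoint
        (Finset.disjoint_filter_filter_not _ _ _), Finset.filter_union_filter_not_eq]
      simp
    rw [← Fintype.card_congr e] at h1
    omega
  rw [Matrix.rank_eq_finrank_span_cols]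
  change Module.finrank ℝ (Submodule.span ℝ (Set.range Nᵀ)) = k
  rw [hrange, finrank_span_eq_card hLI, hcard]

/-- Tightness of the rank bound: for the perfect matching graph on `n = 2k` vertices, the
matrix with `1/C` on the diagonal and on matched pairs, and `0` elsewhere, is an optimal
solution of (REG) of rank exactly `n/2 = k`. -/
theorem perfect_matching_rank_tight (n k : ℕ) (hn : n = 2 * k)
    (A : Matrix (Fin n) (Fin n) ℝ)
    (hsym : A.IsSymm) (hdiag : ∀ i, A i i = 0)
    (h01 : ∀ i j, A i j = 0 ∨ A i j = 1)
    (hmatch : ∀ i, ∑ j, A i j = 1)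
    (C : ℝ) (hC : 1 ≤ C)
    (Pstar : Matrix (Fin n) (Fin n) ℝ)
    (hPstar : ∀ i j, Pstar i j =
      if i = j then 1 / C else if A i j = 1 then 1 / C else 0) :
    StrictFeasible A Pstar ∧
    (∀ M, StrictFeasible A M → regLL A C M ≤ regLL A C Pstar) ∧
    Pstar.rank = k := by
  obtain ⟨σ, hA, hinv, hσne⟩ := matching_sigma A hsym hdiag h01 hmatch
  have hC0 : (0:ℝ) < C := lt_of_lt_of_le one_pos hC
  have hc0 : (0:ℝ) < 1/C := by positivity
  have hc1 : 1/C ≤ 1 := by rw [div_le_one hC0]; linarith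
  have hP : ∀ i j, Pstar i j = if i = j then 1/C else if j = σ i then 1/C else 0 := by
    intro i j
    rw [hPstar]
    rcases eq_or_ne i j with rfl | h
    · simp
    · by_cases h2 : j = σ i <;> simp [hA, h, h2]
  -- the involutive permutation
  let e : Equiv.Perm (Fin n) := Function.Involutive.toPerm σ hinv
  have hsumσ : ∀ f : Fin n → ℝ, ∑ i, f (σ i) = ∑ i, f i := fun f => Equiv.sum_comp e f
  -- PSD of Pstar
  have hmv : ∀ (x : Fin n → ℝ) i, (Pstar.mulVec x) i = (1/C) * x i + (1/C) * x (σ i) := by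
    intro x i
    rw [Matrix.mulVec, dotProduct]
    have hterm : ∀ j, Pstar i j * x j
        = (if j = i then (1/C) * x i else 0) + (if j = σ i then (1/C) * x (σ i) else 0) := by
      intro j
      rw [hP]
      rcases eq_or_ne j i with rfl | h
      · have : ¬ j = σ j := fun hh => hσne j hh.symm
        simp [this]
      · rcases eq_or_ne j (σ i) with rfl | h2
        · simp [h, (Ne.symm h)]
        · simp [h, h2, Ne.symm h]
    rw [Finset.sum_congr rfl fun j _ => hterm j, Finset.sum_add_distrib,
      Finset.sum_ite_eq' univ i, Finset.sum_ite_eq' univ (σ i)]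
    simp
  have hpsdP : Pstar.PosSemidef := by
    refine Matrix.posSemidef_iff_dotProduct_mulVec.mpr ⟨?_, ?_⟩
    · ext i j
      rw [Matrix.conjTranspose_apply, star_trivial, hP, hP]
      rcases eq_or_ne i j with rfl | h
      · simp
      · have hiff : (i = σ j) ↔ (j = σ i) := by
          constructor <;> (intro hh; rw [hh, hinv])
        by_cases h2 : j = σ i
        · rw [if_neg (Ne.symm h), if_neg h, if_pos h2, if_pos (hiff.mpr h2)]
        · rw [if_neg (Ne.symm h), if_neg h, if_neg h2,
            if_neg (fun hh => h2 (hiff.mp hh))]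
    · intro x
      have hx : star x = x := star_trivial x
      rw [hx, dotProduct]
      have h1 : ∑ i, x i * (Pstar.mulVec x) i
          = (1/C) * ∑ i, x i * (x i + x (σ i)) := by
        rw [Finset.mul_sum]
        refine Finset.sum_congr rfl fun i _ => ?_
        rw [hmv x i]; ring
      have h2 : ∑ i, x i * (x i + x (σ i)) = (1/2) * ∑ i, (x i + x (σ i))^2 := by
        have hs1 : ∑ i, x i * (x i + x (σ i)) = ∑ i, x i^2 + ∑ i, x i * x (σ i) := by
          rw [← Finset.sum_add_distrib]
          exact Finset.sum_congr rfl fun i _ => by ring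
        have hs2 : ∑ i, (x i + x (σ i))^2
            = 2*(∑ i, x i^2) + 2*(∑ i, x i * x (σ i)) := by
          have hexp : ∀ i, (x i + x (σ i))^2
              = x i^2 + 2*(x i * x (σ i)) + x (σ i)^2 := fun i => by ring
          rw [Finset.sum_congr rfl fun i _ => hexp i, Finset.sum_add_distrib,
            Finset.sum_add_distrib, hsumσ (fun i => x i^2), ← Finset.mul_sum]
          ring
        rw [hs1, hs2]; ring
      rw [h1, h2]
      have : 0 ≤ ∑ i, (x i + x (σ i))^2 := Finset.sum_nonneg fun i _ => sq_nonneg _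
      positivity
  have hfeas : StrictFeasible A Pstar := by
    refine ⟨hpsdP, fun i j hij => ?_, fun i j hAij => ?_, fun i j hij hAij => ?_⟩
    · rw [hP, if_neg hij]
      by_cases h2 : j = σ i
      · rw [if_pos h2]; exact ⟨le_of_lt hc0, hc1⟩
      · rw [if_neg h2]; norm_num
    · have hj : j = σ i := by
        by_contra h
        rw [hA, if_neg h] at hAij; norm_num at hAij
      have hij : i ≠ j := by rw [hj]; exact fun hh => hσne i hh.symm
      rw [hP, if_neg hij, if_pos hj]; exact hc0
    · have hj : ¬ j = σ i := by
        intro h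
        rw [hA, if_pos h] at hAij; norm_num at hAij
      rw [hP, if_neg hij, if_neg hj]; norm_num
  -- value at Pstar
  have hbern : bernLL A Pstar = n * Real.log (1/C) := by
    unfold bernLL
    have hterm : ∀ i j, (if i ≠ j then
        A i j * Real.log (Pstar i j) + (1 - A i j) * Real.log (1 - Pstar i j) else 0)
        = if j = σ i then Real.log (1/C) else 0 := by
      intro i j
      rcases eq_or_ne i j with rfl | h
      · have : ¬ i = σ i := fun hh => hσne i hh.symm
        simp [this]
      · by_cases h2 : j = σ i
        · rw [if_pos (by exact h), if_pos h2, hA, hP, if_pos h2, if_neg h, if_pos h2]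
          ring
        · rw [if_pos (by exact h), if_neg h2, hA, hP, if_neg h2, if_neg h, if_neg h2]
          simp
    rw [Finset.sum_congr rfl fun i _ => Finset.sum_congr rfl fun j _ => hterm i j]
    rw [Finset.sum_congr rfl fun i _ => Finset.sum_ite_eq' univ (σ i)
      (fun _ => Real.log (1/C))]
    simp [Finset.card_univ, mul_comm]
  have htr : Pstar.trace = n * (1/C) := by
    rw [Matrix.trace]
    have : ∀ i, Pstar.diag i = 1/C := fun i => by rw [Matrix.diag_apply, hP, if_pos rfl]
    rw [Finset.sum_congr rfl fun i _ => this i]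
    simp [Finset.card_univ, mul_comm]
  have hvalP : regLL A C Pstar = n * (Real.log (1/C) - 1) := by
    unfold regLL
    rw [hbern, htr]
    field_simp
  refine ⟨hfeas, fun M hM => ?_, ?_⟩
  · obtain ⟨hpsd, hrange01, hpos, hlt1⟩ := hM
    have hCS : ∀ i j, (M i j)^2 ≤ M i i * M j j := by
      intro i j
      obtain ⟨m, B, hB⟩ := Matrix.posSemidef_iff_eq_sum_vecMulVec.mp hpsd
      have hap : ∀ a b, M a b = ∑ l, B l a * B l b := by
        intro a b; rw [hB]; simp [Matrix.sum_apply, Matrix.vecMulVec_apply]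
      have hcs := Finset.sum_mul_sq_le_sq_mul_sq univ (fun l => B l i) (fun l => B l j)
      rw [hap i j, hap i i, hap j j]
      calc (∑ l, B l i * B l j)^2 ≤ (∑ l, (B l i)^2) * (∑ l, (B l j)^2) := hcs
        _ = (∑ l, B l i * B l i) * (∑ l, B l j * B l j) := by simp [sq]
    have hdn : ∀ i, 0 ≤ M i i := fun i => hpsd.diag_nonneg
    have hMσpos : ∀ i, 0 < M i (σ i) := fun i => hpos i (σ i) (by rw [hA, if_pos rfl])
    have hdpos : ∀ i, 0 < M i i := by
      intro i
      nlinarith [hCS i (σ i), hMσpos i, hdn i, hdn (σ i)]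
    have hlogσ : ∀ i, Real.log (M i (σ i))
        ≤ (Real.log (M i i) + Real.log (M (σ i) (σ i))) / 2 := by
      intro i
      have h1 : (0:ℝ) < (M i (σ i))^2 := pow_pos (hMσpos i) 2
      have h2 : Real.log ((M i (σ i))^2) ≤ Real.log (M i i * M (σ i) (σ i)) :=
        Real.log_le_log h1 (hCS i (σ i))
      rw [Real.log_pow, Real.log_mul (ne_of_gt (hdpos i)) (ne_of_gt (hdpos (σ i)))] at h2
      push_cast at h2
      linarith
    have hbb : bernLL A M ≤ ∑ i, Real.log (M i i) := by
      have hterm : ∀ i j, (if i ≠ j then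
          A i j * Real.log (M i j) + (1 - A i j) * Real.log (1 - M i j) else 0)
          ≤ if j = σ i then (Real.log (M i i) + Real.log (M j j)) / 2 else 0 := by
        intro i j
        rcases eq_or_ne i j with rfl | h
        · have : ¬ i = σ i := fun hh => hσne i hh.symm
          simp [this]
        · by_cases h2 : j = σ i
          · rw [if_pos (by exact h), if_pos h2, hA, if_pos h2]
            have := hlogσ i
            rw [← h2] at this
            simpa using this
          · rw [if_pos (by exact h), if_neg h2, hA, if_neg h2]
            have h3 := (hrange01 i j h).1
            have h4 := (hrange01 i j h).2
            have : Real.log (1 - M i j) ≤ 0 := Real.log_nonpos (by linarith) (by linarith)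
            simpa using this
      have h1 : bernLL A M ≤ ∑ i, ∑ j,
          (if j = σ i then (Real.log (M i i) + Real.log (M j j)) / 2 else 0) := by
        unfold bernLL
        exact Finset.sum_le_sum fun i _ => Finset.sum_le_sum fun j _ => hterm i j
      have h2 : ∀ i, ∑ j, (if j = σ i then (Real.log (M i i) + Real.log (M j j)) / 2 else 0)
          = (Real.log (M i i) + Real.log (M (σ i) (σ i))) / 2 := fun i => by
        rw [Finset.sum_ite_eq' univ (σ i)]; simp
      rw [Finset.sum_congr rfl fun i _ => h2 i] at h1
      have h3 : ∑ i, (Real.log (M i i) + Real.log (M (σ i) (σ i))) / 2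
          = ∑ i, Real.log (M i i) := by
        have hh : ∀ i, (Real.log (M i i) + Real.log (M (σ i) (σ i))) / 2
            = (1/2) * Real.log (M i i) + (1/2) * Real.log (M (σ i) (σ i)) :=
          fun i => by ring
        rw [Finset.sum_congr rfl fun i _ => hh i, Finset.sum_add_distrib,
          ← Finset.mul_sum, ← Finset.mul_sum, hsumσ (fun i => Real.log (M i i))]
        ring
      linarith
    have hpt : ∀ i, Real.log (M i i) - C * M i i ≤ Real.log (1/C) - 1 := by
      intro i
      have h1 : Real.log (C * M i i) ≤ C * M i i - 1 :=
        Real.log_le_sub_one_of_pos (mul_pos hC0 (hdpos i))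
      rw [Real.log_mul (ne_of_gt hC0) (ne_of_gt (hdpos i))] at h1
      have h2 : Real.log (1/C) = - Real.log C := by
        rw [one_div, Real.log_inv]
      linarith
    have htrM : M.trace = ∑ i, M i i := rfl
    have : regLL A C M ≤ ∑ i, (Real.log (M i i) - C * M i i) := by
      unfold regLL
      rw [htrM, Finset.sum_sub_distrib, Finset.mul_sum]
      linarith
    calc regLL A C M ≤ ∑ i, (Real.log (M i i) - C * M i i) := this
      _ ≤ ∑ i, (Real.log (1/C) - 1) := Finset.sum_le_sum fun i _ => hpt i
      _ = n * (Real.log (1/C) - 1) := by simp [Finset.card_univ]; ring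
      _ = regLL A C Pstar := hvalP.symm
  · -- rank
    set N : Matrix (Fin n) (Fin n) ℝ :=
      Matrix.of (fun i j => if i = j then 1 else if i = σ j then 1 else 0) with hNdef
    have hfact : Pstar = ((1/C) • (1 : Matrix (Fin n) (Fin n) ℝ)) * N := by
      ext i j
      rw [Matrix.smul_mul, Matrix.one_mul, Matrix.smul_apply, hP]
      have hNij : N i j = if i = j then 1 else if i = σ j then 1 else 0 := rfl
      rw [hNij]
      have hiff : (i = σ j) ↔ (j = σ i) := by
        constructor <;> (intro hh; rw [hh, hinv])
      rcases eq_or_ne i j with rfl | h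
      · rw [if_pos rfl, if_pos rfl]; simp
      · by_cases h2 : j = σ i
        · rw [if_neg h, if_pos h2, if_neg h, if_pos (hiff.mpr h2)]; simp
        · rw [if_neg h, if_neg h2, if_neg h, if_neg (fun hh => h2 (hiff.mp hh))]
          simp
    have hdet : IsUnit ((1/C) • (1 : Matrix (Fin n) (Fin n) ℝ)).det := by
      rw [Matrix.det_smul, Matrix.det_one, mul_one]
      exact isUnit_iff_ne_zero.mpr (pow_ne_zero _ (ne_of_gt hc0))
    rw [hfact, Matrix.rank_mul_eq_right_of_isUnit_det _ _ hdet]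
    exact rank_matching hn σ hinv hσne N (fun i j => rfl)
end

section
/- Let G be a simple graph on n vertices with adjacency matrix A, degree matrix D, and m edges, and let C ≥ 1. Then the matrix (1/C)(D + A) is strictly feasible for (REG) and ℒ_{A,C}((1/C)(D + A)) = −2m·log C − 2m. Consequently, every optimal solution P* of (REG) with parameter C satisfies ℒ_{A,C}(P*) ≥ −2m(log C + 1), and also L_A(P*) := Σ_{i≠j}[A_ij·log P*_ij + (1−A_ij)·log(1−P*_ij)] ≥ −2m(log C + 1). -/
open Finset

/-- Optimality for (REG). -/
def IsOptimalREG {n : ℕ} (A : Matrix (Fin n) (Fin n) ℝ) (C : ℝ)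
    (P : Matrix (Fin n) (Fin n) ℝ) : Prop :=
  StrictFeasible A P ∧ ∀ M, StrictFeasible A M → regLL A C M ≤ regLL A C P

/-- The scaled signless Laplacian `(1/C)(D + A)` is strictly feasible for (REG), achieves
objective value `-2m log C - 2m`, and hence every optimal solution `P*` of (REG) satisfies
`ℒ_{A,C}(P*) ≥ -2m(log C + 1)` and `L_A(P*) ≥ -2m(log C + 1)`. -/
theorem scaled_signless_laplacian_lower_bound (n m : ℕ)
    (A : Matrix (Fin n) (Fin n) ℝ)
    (hsym : A.IsSymm) (hdiag : ∀ i, A i i = 0)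
    (h01 : ∀ i j, A i j = 0 ∨ A i j = 1)
    (hm : ∑ i, ∑ j, A i j = 2 * m)
    (C : ℝ) (hC : 1 ≤ C) :
    StrictFeasible A ((1 / C) • (Matrix.diagonal (fun i => ∑ j, A i j) + A)) ∧
    regLL A C ((1 / C) • (Matrix.diagonal (fun i => ∑ j, A i j) + A)) =
      -(2 * m) * Real.log C - 2 * m ∧
    (∀ Pstar, IsOptimalREG A C Pstar →
      -(2 * m) * (Real.log C + 1) ≤ regLL A C Pstar ∧
      -(2 * m) * (Real.log C + 1) ≤ bernLL A Pstar) := by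
  have hC0 : (0:ℝ) < C := lt_of_lt_of_le one_pos hC
  have hCne : C ≠ 0 := ne_of_gt hC0
  have hA0 : ∀ i j, (0:ℝ) ≤ A i j := fun i j => by rcases h01 i j with h | h <;> simp [h]
  have hA1 : ∀ i j, A i j ≤ 1 := fun i j => by rcases h01 i j with h | h <;> simp [h]
  have hsym' : ∀ i j, A j i = A i j := by
    intro i j
    have := congrFun (congrFun hsym j) i
    simpa using this.symm
  set d : Fin n → ℝ := fun i => ∑ j, A i j with hd
  set M : Matrix (Fin n) (Fin n) ℝ := (1 / C) • (Matrix.diagonal d + A) with hM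
  have hMoff : ∀ i j, i ≠ j → M i j = A i j / C := by
    intro i j hij
    simp [hM, Matrix.diagonal_apply_ne _ hij, div_eq_inv_mul, one_div]
  -- positive semidefiniteness
  have hquad : ∀ x : Fin n → ℝ, 0 ≤ dotProduct x ((Matrix.diagonal d + A).mulVec x) := by
    intro x
    have e1 : ∑ i, ∑ j, A i j * (x i)^2 = ∑ i, d i * (x i)^2 := by
      refine Finset.sum_congr rfl fun i _ => ?_
      rw [← Finset.sum_mul]
    have e2 : ∑ i, ∑ j, A i j * (x j)^2 = ∑ i, d i * (x i)^2 := by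
      rw [Finset.sum_comm]
      refine Finset.sum_congr rfl fun j _ => ?_
      rw [← Finset.sum_mul]
      congr 1
      exact Finset.sum_congr rfl fun i _ => hsym' j i
    have hlhs : dotProduct x ((Matrix.diagonal d + A).mulVec x)
        = ∑ i, d i * (x i)^2 + ∑ i, ∑ j, A i j * (x i * x j) := by
      rw [Matrix.add_mulVec, dotProduct_add]
      congr 1
      · simp [dotProduct, Matrix.mulVec_diagonal]
        exact Finset.sum_congr rfl fun i _ => by ring
      · simp [dotProduct, Matrix.mulVec, Finset.mul_sum]
        exact Finset.sum_congr rfl fun i _ => Finset.sum_congr rfl fun j _ => by ring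
    have hexp : 2 * dotProduct x ((Matrix.diagonal d + A).mulVec x)
        = ∑ i, ∑ j, A i j * (x i + x j)^2 := by
      have : ∀ i j, A i j * (x i + x j)^2
          = A i j * (x i)^2 + 2 * (A i j * (x i * x j)) + A i j * (x j)^2 := by
        intro i j; ring
      simp only [this, Finset.sum_add_distrib, ← Finset.mul_sum]
      rw [e1, e2, hlhs]
      ring
    have hnn : 0 ≤ ∑ i, ∑ j, A i j * (x i + x j)^2 :=
      Finset.sum_nonneg fun i _ => Finset.sum_nonneg fun j _ =>
        mul_nonneg (hA0 i j) (sq_nonneg _)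
    linarith [hexp ▸ hnn]
  have hpsd : M.PosSemidef := by
    rw [Matrix.posSemidef_iff_dotProduct_mulVec]
    constructor
    · rw [Matrix.IsHermitian]
      ext i j
      by_cases hij : i = j
      · subst hij; simp [hM]
      · have hji : j ≠ i := fun h => hij h.symm
        simp [hM, Matrix.diagonal_apply_ne _ hij, Matrix.diagonal_apply_ne _ hji, hsym' i j]
    · intro x
      have := hquad x
      rw [hM]
      simp only [Matrix.smul_mulVec, dotProduct_smul, star_trivial, smul_eq_mul]
      positivity
  have hfeas : StrictFeasible A M := by
    refine ⟨hpsd, ?_, ?_, ?_⟩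
    · intro i j hij
      rw [hMoff i j hij]
      exact ⟨div_nonneg (hA0 i j) hC0.le, (div_le_one hC0).2 ((hA1 i j).trans hC)⟩
    · intro i j h1
      have hij : i ≠ j := by
        intro h; rw [h, hdiag j] at h1; norm_num at h1
      rw [hMoff i j hij, h1]
      positivity
    · intro i j hij h0
      rw [hMoff i j hij, h0]
      simpa using one_pos
  -- bernLL value
  have hbern : bernLL A M = -(2 * m) * Real.log C := by
    unfold bernLL
    have : ∀ i j, (if i ≠ j then A i j * Real.log (M i j)
        + (1 - A i j) * Real.log (1 - M i j) else 0) = A i j * (-Real.log C) := by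
      intro i j
      by_cases hij : i = j
      · simp [hij, hdiag]
      · rw [if_pos hij, hMoff i j hij]
        rcases h01 i j with h | h
        · simp [h]
        · simp [h, one_div, Real.log_inv]
    simp only [this, ← Finset.sum_mul]
    rw [hm]
    ring
  have htr : M.trace = (1 / C) * (2 * m) := by
    have : M.trace = (1 / C) * ∑ i, (d i + A i i) := by
      simp [hM, Matrix.trace, Matrix.diag, Finset.mul_sum, mul_add]
    rw [this]
    congr 1
    simp [hdiag, hd, hm]
    exact hm
  have hreg : regLL A C M = -(2 * m) * Real.log C - 2 * m := by
    rw [regLL, hbern, htr]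
    field_simp
  refine ⟨hfeas, hreg, ?_⟩
  intro P hP
  have hle : -(2 * m) * (Real.log C + 1) ≤ regLL A C P := by
    have := hP.2 M hfeas
    rw [hreg] at this
    linarith
  refine ⟨hle, ?_⟩
  have htrP : 0 ≤ P.trace := by
    refine Finset.sum_nonneg fun i _ => ?_
    have := (Matrix.posSemidef_iff_dotProduct_mulVec.mp hP.1.1).2 (Pi.single i 1)
    simpa [dotProduct, Matrix.mulVec, Pi.single_apply, Finset.sum_ite_eq,
      Finset.sum_ite_eq'] using this
  have : bernLL A P = regLL A C P + C * P.trace := by rw [regLL]; ring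
  rw [this]
  nlinarith [mul_nonneg hC0.le htrP]
end

section
/- (Dual-feasible upper bound on the optimal value.) Let G be a simple graph on n vertices with adjacency matrix A, degrees d_i, maximum degree Δ := max_i d_i, and m edges, and let C ≥ max(Δ, 1). Then every optimal solution P* of (REG) with parameter C satisfies ℒ_{A,C}(P*) ≤ −2m − 2m·log C + Σ_{(i,j): i∼j} log max(d_i, d_j), where the sum is over ordered pairs (i,j) with i∼j. -/
open Finset

lemma psd_diag {n : ℕ} {P : Matrix (Fin n) (Fin n) ℝ} (h : P.PosSemidef) (i : Fin n) :
    0 ≤ P i i := by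
  have := h.dotProduct_mulVec_nonneg (Pi.single i 1)
  simpa [Matrix.mulVec, dotProduct, Pi.single_apply] using this

lemma psd_offdiag {n : ℕ} {P : Matrix (Fin n) (Fin n) ℝ} (h : P.PosSemidef) (i j : Fin n) :
    2 * P i j ≤ P i i + P j j := by
  rcases eq_or_ne i j with rfl | hij
  · have := psd_diag h i; linarith
  have hji : P j i = P i j := by simpa using h.isHermitian.apply i j
  have := h.dotProduct_mulVec_nonneg (Pi.single i 1 - Pi.single j 1)
  simp only [Matrix.mulVec, dotProduct, Pi.sub_apply, Pi.single_apply] at this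
  have e : ∀ a : Fin n, ∑ b, P a b * ((if b = i then (1:ℝ) else 0) - if b = j then 1 else 0)
      = P a i - P a j := by
    intro a
    simp [mul_sub, Finset.sum_sub_distrib, mul_ite]
  rw [Finset.sum_congr rfl (fun a _ => by rw [e a])] at this
  have : (0:ℝ) ≤ ∑ a, ((if a = i then (1:ℝ) else 0) - if a = j then 1 else 0) * (P a i - P a j) := by
    simpa [Pi.single_apply] using this
  rw [Finset.sum_congr rfl (fun a _ => (sub_mul _ _ _))] at this
  simp [Finset.sum_sub_distrib, ite_mul, hij, hji] at this
  linarith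

/-- Dual-feasible upper bound on the optimal value of (REG) when `C ≥ max(Δ, 1)`. -/
theorem dual_feasible_upper_bound (n m : ℕ)
    (A : Matrix (Fin n) (Fin n) ℝ)
    (hsym : A.IsSymm) (hdiag : ∀ i, A i i = 0)
    (h01 : ∀ i j, A i j = 0 ∨ A i j = 1)
    (d : Fin n → ℝ) (hd : ∀ i, d i = ∑ j, A i j)
    (hm : ∑ i, ∑ j, A i j = 2 * m)
    (C : ℝ) (hC1 : 1 ≤ C) (hCd : ∀ i, d i ≤ C)
    (Pstar : Matrix (Fin n) (Fin n) ℝ) (hopt : IsOptimalREG A C Pstar) :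
    regLL A C Pstar ≤
      -(2 * m) - 2 * m * Real.log C +
        ∑ i, ∑ j, (if A i j = 1 then Real.log (max (d i) (d j)) else 0) := by
  obtain ⟨⟨hPSD, hbox, hpos, hlt1⟩, -⟩ := hopt
  have hC0 : (0:ℝ) < C := lt_of_lt_of_le one_pos hC1
  have hAnn : ∀ i j, 0 ≤ A i j := by
    intro i j; rcases h01 i j with h | h <;> rw [h] <;> norm_num
  -- degree ≥ 1 at endpoints of an edge
  have hd1 : ∀ i j, A i j = 1 → 1 ≤ d i := by
    intro i j h
    rw [hd i]
    calc (1:ℝ) = A i j := h.symm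
    _ ≤ ∑ k, A i k := Finset.single_le_sum (fun k _ => hAnn i k) (Finset.mem_univ j)
  have hD1 : ∀ i j, A i j = 1 → 1 ≤ max (d i) (d j) := fun i j h =>
    le_trans (hd1 i j h) (le_max_left _ _)
  have hPd : ∀ i, 0 ≤ Pstar i i := psd_diag hPSD
  -- Step A: per-term bound on bernLL
  have stepA : bernLL A Pstar ≤ ∑ i, ∑ j,
      if A i j = 1 then
        (C / max (d i) (d j)) * ((Pstar i i + Pstar j j) / 2) - 1 - Real.log C
          + Real.log (max (d i) (d j))
      else 0 := by
    unfold bernLL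
    apply Finset.sum_le_sum; intro i _
    apply Finset.sum_le_sum; intro j _
    rcases eq_or_ne i j with rfl | hij
    · simp [hdiag i]
    rcases h01 i j with h0 | h1
    · simp only [hij, if_true, h0, if_neg (by norm_num : (0:ℝ) ≠ 1), ne_eq, not_false_iff]
      have h := hbox i j hij
      have : Real.log (1 - Pstar i j) ≤ 0 :=
        Real.log_nonpos (by linarith [h.1]) (by linarith [h.1])
      nlinarith [this]
    · simp only [hij, if_true, h1, if_pos rfl, ne_eq, not_false_iff]
      have hx : 0 < Pstar i j := hpos i j h1
      set D := max (d i) (d j) with hDdef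
      have hD : (1:ℝ) ≤ D := hD1 i j h1
      have hD0 : (0:ℝ) < D := lt_of_lt_of_le one_pos hD
      have ht : 0 < C / D := div_pos hC0 hD0
      have hlog : Real.log ((C / D) * Pstar i j) ≤ (C / D) * Pstar i j - 1 :=
        Real.log_le_sub_one_of_pos (mul_pos ht hx)
      rw [Real.log_mul (ne_of_gt ht) (ne_of_gt hx), Real.log_div (ne_of_gt hC0) (ne_of_gt hD0)]
        at hlog
      have hmid : Pstar i j ≤ (Pstar i i + Pstar j j) / 2 := by
        have := psd_offdiag hPSD i j; linarith
      have hmul : (C / D) * Pstar i j ≤ (C / D) * ((Pstar i i + Pstar j j) / 2) :=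
        mul_le_mul_of_nonneg_left hmid (le_of_lt ht)
      have : Real.log (Pstar i j) ≤ (C / D) * ((Pstar i i + Pstar j j) / 2) - 1 - Real.log C
          + Real.log D := by linarith
      linarith
  -- split the RHS sum
  have hsplit : (∑ i, ∑ j,
      if A i j = 1 then
        (C / max (d i) (d j)) * ((Pstar i i + Pstar j j) / 2) - 1 - Real.log C
          + Real.log (max (d i) (d j))
      else 0)
    = (∑ i, ∑ j, if A i j = 1 then (C / max (d i) (d j)) * ((Pstar i i + Pstar j j) / 2) else 0)
      - (∑ i, ∑ j, if A i j = 1 then (1:ℝ) else 0)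
      - (∑ i, ∑ j, if A i j = 1 then Real.log C else 0)
      + (∑ i, ∑ j, if A i j = 1 then Real.log (max (d i) (d j)) else 0) := by
    simp only [← Finset.sum_add_distrib, ← Finset.sum_sub_distrib]
    apply Finset.sum_congr rfl; intro i _
    apply Finset.sum_congr rfl; intro j _
    split <;> ring
  -- counting : number of ordered edges is 2m
  have hcount : (∑ i, ∑ j, if A i j = 1 then (1:ℝ) else 0) = 2 * m := by
    rw [← hm]
    apply Finset.sum_congr rfl; intro i _
    apply Finset.sum_congr rfl; intro j _
    rcases h01 i j with h | h <;> simp [h]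
  have hlogCsum : (∑ i, ∑ j, if A i j = 1 then Real.log C else 0) = 2 * m * Real.log C := by
    have : ∀ i j, (if A i j = 1 then Real.log C else 0)
        = (if A i j = 1 then (1:ℝ) else 0) * Real.log C := by
      intro i j; split <;> ring
    rw [Finset.sum_congr rfl fun i _ => Finset.sum_congr rfl fun j _ => this i j]
    simp only [← Finset.sum_mul]
    rw [hcount]
  -- symmetry: combine the (Pii+Pjj)/2 terms into Pii terms
  have hsymm : (∑ i, ∑ j, if A i j = 1 then
        (C / max (d i) (d j)) * ((Pstar i i + Pstar j j) / 2) else 0)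
      = ∑ i, ∑ j, if A i j = 1 then (C / max (d i) (d j)) * Pstar i i else 0 := by
    have hAji : ∀ i j, A j i = A i j := fun i j => hsym.apply i j
    have e1 : (∑ i, ∑ j, if A i j = 1 then
          (C / max (d i) (d j)) * ((Pstar i i + Pstar j j) / 2) else 0)
        = (∑ i, ∑ j, if A i j = 1 then (C / max (d i) (d j)) * (Pstar i i / 2) else 0)
          + (∑ i, ∑ j, if A i j = 1 then (C / max (d i) (d j)) * (Pstar j j / 2) else 0) := by
      simp only [← Finset.sum_add_distrib]
      apply Finset.sum_congr rfl; intro i _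
      apply Finset.sum_congr rfl; intro j _
      split <;> ring
    have e2 : (∑ i, ∑ j, if A i j = 1 then (C / max (d i) (d j)) * (Pstar j j / 2) else 0)
        = ∑ i, ∑ j, if A i j = 1 then (C / max (d i) (d j)) * (Pstar i i / 2) else 0 := by
      rw [Finset.sum_comm]
      apply Finset.sum_congr rfl; intro i _
      apply Finset.sum_congr rfl; intro j _
      rw [hAji i j, max_comm (d j) (d i)]
    rw [e1, e2, ← Finset.sum_add_distrib]
    apply Finset.sum_congr rfl; intro i _
    rw [← Finset.sum_add_distrib]
    apply Finset.sum_congr rfl; intro j _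
    split <;> ring
  -- the Pii sum is at most C * trace
  have htr : (∑ i, ∑ j, if A i j = 1 then (C / max (d i) (d j)) * Pstar i i else 0)
      ≤ C * Pstar.trace := by
    have htrace : Pstar.trace = ∑ i, Pstar i i := by simp [Matrix.trace, Matrix.diag]
    rw [htrace, Finset.mul_sum]
    apply Finset.sum_le_sum; intro i _
    have step1 : (∑ j, if A i j = 1 then (C / max (d i) (d j)) * Pstar i i else 0)
        ≤ ∑ j, A i j * ((C / d i) * Pstar i i) := by
      apply Finset.sum_le_sum; intro j _
      rcases h01 i j with h | h
      · simp [h]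
      · rw [if_pos h, h, one_mul]
        have hdi : (1:ℝ) ≤ d i := hd1 i j h
        have : C / max (d i) (d j) ≤ C / d i :=
          div_le_div_of_nonneg_left (le_of_lt hC0) (by linarith) (le_max_left _ _)
        exact mul_le_mul_of_nonneg_right this (hPd i)
      -- done
    have step2 : (∑ j, A i j * ((C / d i) * Pstar i i)) = d i * ((C / d i) * Pstar i i) := by
      rw [← Finset.sum_mul, ← hd i]
    have step3 : d i * ((C / d i) * Pstar i i) ≤ C * Pstar i i := by
      rcases eq_or_ne (d i) 0 with h0 | h0
      · rw [h0, zero_mul]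
        exact mul_nonneg (le_of_lt hC0) (hPd i)
      · rw [show d i * ((C / d i) * Pstar i i) = C * Pstar i i by field_simp]
    calc (∑ j, if A i j = 1 then (C / max (d i) (d j)) * Pstar i i else 0)
        ≤ ∑ j, A i j * ((C / d i) * Pstar i i) := step1
      _ = d i * ((C / d i) * Pstar i i) := step2
      _ ≤ C * Pstar i i := step3
  unfold regLL
  rw [hsplit, hcount, hlogCsum, hsymm] at stepA
  linarith
end

section
/- (Exact recovery in the weak-regularization regime.) Let G be a simple graph on n vertices with adjacency matrix A and let 0 < C ≤ 1. Then every optimal solution P* of (REG) with parameter C satisfies P*_ij = A_ij for all i ≠ j. -/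
open Finset

/-- The summand of `bernLL`. -/
noncomputable def bTerm {n : ℕ} (A M : Matrix (Fin n) (Fin n) ℝ) (i j : Fin n) : ℝ :=
  A i j * Real.log (M i j) + (1 - A i j) * Real.log (1 - M i j)

lemma bernLL_sub {n : ℕ} (A M P : Matrix (Fin n) (Fin n) ℝ) (i j : Fin n) (hij : i ≠ j)
    (hsame : ∀ a b, a ≠ b → ¬(a = i ∧ b = j) → ¬(a = j ∧ b = i) → M a b = P a b) :
    bernLL A M - bernLL A P = (bTerm A M i j - bTerm A P i j) +
      (bTerm A M j i - bTerm A P j i) := by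
  have key : bernLL A M - bernLL A P
      = ∑ a, ∑ b, ((if a ≠ b then bTerm A M a b else 0) - (if a ≠ b then bTerm A P a b else 0)) := by
    rw [bernLL, bernLL, ← Finset.sum_sub_distrib]
    refine Finset.sum_congr rfl fun a _ => ?_
    rw [← Finset.sum_sub_distrib]
    rfl
  rw [key]
  rw [Finset.sum_eq_add_of_mem i j (Finset.mem_univ i) (Finset.mem_univ j) hij ?_]
  · congr 1
    · rw [Finset.sum_eq_single_of_mem j (Finset.mem_univ j) ?_]
      · simp [hij]
      · intro b _ hb
        rcases eq_or_ne i b with rfl | hib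
        · simp
        · have : M i b = P i b := hsame i b hib (fun h => hb h.2) (fun h => (hij h.1).elim)
          simp [bTerm, this]
    · rw [Finset.sum_eq_single_of_mem i (Finset.mem_univ i) ?_]
      · simp [hij.symm]
      · intro b _ hb
        rcases eq_or_ne j b with rfl | hjb
        · simp
        · have : M j b = P j b := hsame j b hjb (fun h => (hij.symm h.1).elim) (fun h => hb h.2)
          simp [bTerm, this]
  · intro a _ ha
    refine Finset.sum_eq_zero fun b _ => ?_
    rcases eq_or_ne a b with rfl | hab
    · simp
    · have : M a b = P a b := hsame a b hab (fun h => ha.1 h.1) (fun h => ha.2 h.1)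
      simp [bTerm, this, hab]

lemma rankOne_psd {n : ℕ} (v : Fin n → ℝ) (t : ℝ) (ht : 0 ≤ t) :
    (t • Matrix.vecMulVec v v).PosSemidef := by
  rw [Matrix.posSemidef_iff_dotProduct_mulVec]
  constructor
  · ext a b
    simp [Matrix.vecMulVec, Matrix.conjTranspose, mul_comm]
  · intro x
    have : dotProduct (star x) (Matrix.mulVec (t • Matrix.vecMulVec v v) x)
        = t * (dotProduct v x * dotProduct v x) := by
      simp only [Matrix.smul_mulVec, dotProduct_smul, smul_eq_mul]
      congr 1
      simp only [dotProduct, Matrix.mulVec, Matrix.vecMulVec_apply, star_trivial]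
      rw [Finset.sum_mul_sum]
      refine Finset.sum_congr rfl fun a _ => ?_
      rw [Finset.mul_sum]
      refine Finset.sum_congr rfl fun b _ => ?_
      ring
    rw [this]
    exact mul_nonneg ht (mul_self_nonneg _)

/-- Exact recovery in the weak-regularization regime `0 < C ≤ 1`: every optimal solution
of (REG) agrees with the adjacency matrix off the diagonal. -/
theorem exact_recovery_small_C (n : ℕ)
    (A : Matrix (Fin n) (Fin n) ℝ)
    (hsym : A.IsSymm) (hdiag : ∀ i, A i i = 0)
    (h01 : ∀ i j, A i j = 0 ∨ A i j = 1)
    (C : ℝ) (hC0 : 0 < C) (hC1 : C ≤ 1)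
    (Pstar : Matrix (Fin n) (Fin n) ℝ) (hopt : IsOptimalREG A C Pstar) :
    ∀ i j, i ≠ j → Pstar i j = A i j := by
  intro i j hij
  by_contra hne
  obtain ⟨⟨hpsd, hbox, hpos, hlt⟩, hmax⟩ := hopt
  have hAsym : A j i = A i j := by
    have := congrFun (congrFun hsym i) j
    simpa [Matrix.transpose_apply] using this
  have hPsym : Pstar j i = Pstar i j := by
    have := congrFun (congrFun hpsd.1 i) j
    simpa [Matrix.conjTranspose_apply] using this
  set p := Pstar i j with hp
  -- choose the perturbation direction `ε` and size `t`
  obtain ⟨ε, t, hεsq, ht, hnewval, hineq⟩ :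
      ∃ ε t : ℝ, ε * ε = 1 ∧ 0 < t ∧ p + t * ε = A i j ∧
        C * t < (A i j * Real.log (A i j) + (1 - A i j) * Real.log (1 - A i j))
          - (A i j * Real.log p + (1 - A i j) * Real.log (1 - p)) := by
    rcases h01 i j with h0 | h1
    · -- non-edge: p > 0, push it down to 0
      have hp1 : p < 1 := hlt i j hij h0
      have hp0 : 0 ≤ p := (hbox i j hij).1
      have hppos : 0 < p := lt_of_le_of_ne hp0 (by simpa [h0, eq_comm] using hne)
      refine ⟨-1, p, by ring, hppos, by rw [h0]; ring, ?_⟩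
      rw [h0]
      have hlog : Real.log (1 - p) < -p := by
        have := Real.log_lt_sub_one_of_pos (x := 1 - p) (by linarith) (by intro h; simp at h; linarith)
        linarith
      have hCp : C * p ≤ p := by nlinarith
      simp only [zero_mul, sub_zero, one_mul, Real.log_one, zero_add]
      linarith
    · -- edge: p < 1, push it up to 1
      have hppos : 0 < p := hpos i j h1
      have hp1 : p ≤ 1 := (hbox i j hij).2
      have hplt : p < 1 := lt_of_le_of_ne hp1 (by simpa [h1] using hne)
      refine ⟨1, 1 - p, by ring, by linarith, by rw [h1]; ring, ?_⟩
      rw [h1]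
      have hlog : Real.log p < p - 1 := Real.log_lt_sub_one_of_pos hppos (by linarith)
      have hC : C * (1 - p) ≤ 1 - p := by nlinarith
      simp only [one_mul, sub_self, zero_mul, Real.log_one, add_zero]
      linarith
  -- the perturbed matrix
  set v : Fin n → ℝ := fun k => if k = i then 1 else if k = j then ε else 0 with hv
  set M : Matrix (Fin n) (Fin n) ℝ := Pstar + t • Matrix.vecMulVec v v with hM
  have hvi : v i = 1 := by simp [hv]
  have hvj : v j = ε := by simp [hv, hij.symm]
  have hMij : M i j = p + t * ε := by
    simp [hM, Matrix.vecMulVec_apply, hvi, hvj, hp]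
  have hMji : M j i = p + t * ε := by
    simp [hM, Matrix.vecMulVec_apply, hvi, hvj, hPsym, mul_comm]
  have hsame : ∀ a b, a ≠ b → ¬(a = i ∧ b = j) → ¬(a = j ∧ b = i) → M a b = Pstar a b := by
    intro a b hab h1 h2
    have hvab : v a * v b = 0 := by
      rcases eq_or_ne a i with rfl | hai
      · have : b ≠ j := fun h => h1 ⟨rfl, h⟩
        simp [hv, hab.symm, this]
      · rcases eq_or_ne a j with rfl | haj
        · have : b ≠ i := fun h => h2 ⟨rfl, h⟩
          simp [hv, this, hab.symm]
        · simp [hv, hai, haj]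
    simp [hM, Matrix.vecMulVec_apply, hvab]
  -- M is strictly feasible
  have hAval : A i j = p + t * ε := hnewval.symm
  have hA01 : A i j = 0 ∨ A i j = 1 := h01 i j
  have hfeasM : StrictFeasible A M := by
    refine ⟨hpsd.add (rankOne_psd v t ht.le), ?_, ?_, ?_⟩
    · intro a b hab
      rcases eq_or_ne (a, b) (i, j) with h | h
      · rw [Prod.mk.injEq] at h
        rw [h.1, h.2, hMij, ← hAval]
        rcases hA01 with h' | h' <;> rw [h'] <;> norm_num
      · rcases eq_or_ne (a, b) (j, i) with h' | h'
        · rw [Prod.mk.injEq] at h'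
          rw [h'.1, h'.2, hMji, ← hAval]
          rcases hA01 with h'' | h'' <;> rw [h''] <;> norm_num
        · rw [hsame a b hab (fun hc => h (Prod.ext hc.1 hc.2)) (fun hc => h' (Prod.ext hc.1 hc.2))]
          exact hbox a b hab
    · intro a b hab1
      have habne : a ≠ b := by
        intro h; subst h; rw [hdiag] at hab1; norm_num at hab1
      rcases eq_or_ne (a, b) (i, j) with h | h
      · rw [Prod.mk.injEq] at h
        obtain ⟨rfl, rfl⟩ := h
        rw [hMij, ← hAval, hab1]; norm_num
      · rcases eq_or_ne (a, b) (j, i) with h' | h'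
        · rw [Prod.mk.injEq] at h'
          obtain ⟨rfl, rfl⟩ := h'
          rw [hMji, ← hAval, ← hAsym, hab1]
          norm_num
        · rw [hsame a b habne (fun hc => h (Prod.ext hc.1 hc.2)) (fun hc => h' (Prod.ext hc.1 hc.2))]
          exact hpos a b hab1
    · intro a b hab hab0
      rcases eq_or_ne (a, b) (i, j) with h | h
      · rw [Prod.mk.injEq] at h
        obtain ⟨rfl, rfl⟩ := h
        rw [hMij, ← hAval, hab0]; norm_num
      · rcases eq_or_ne (a, b) (j, i) with h' | h'
        · rw [Prod.mk.injEq] at h'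
          obtain ⟨rfl, rfl⟩ := h'
          rw [hMji, ← hAval]
          rw [hAsym] at hab0
          rw [hab0]; norm_num
        · rw [hsame a b hab (fun hc => h (Prod.ext hc.1 hc.2)) (fun hc => h' (Prod.ext hc.1 hc.2))]
          exact hlt a b hab hab0
  -- compare the objective values
  have htrace : M.trace = Pstar.trace + t * (∑ k, v k * v k) := by
    rw [hM, Matrix.trace_add, Matrix.trace_smul]
    simp [Matrix.trace, Matrix.diag, Matrix.vecMulVec_apply, smul_eq_mul, Finset.mul_sum]
  have hsumv : (∑ k, v k * v k) = 2 := by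
    rw [Finset.sum_eq_add_of_mem i j (Finset.mem_univ i) (Finset.mem_univ j) hij ?_]
    · rw [hvi, hvj, hεsq]; ring
    · intro k _ hk
      simp [hv, hk.1, hk.2]
  have hbdiff : bernLL A M - bernLL A Pstar =
      2 * ((A i j * Real.log (A i j) + (1 - A i j) * Real.log (1 - A i j))
        - (A i j * Real.log p + (1 - A i j) * Real.log (1 - p))) := by
    rw [bernLL_sub A M Pstar i j hij hsame]
    simp only [bTerm, hMij, hMji, ← hAval, hAsym, hPsym, ← hp]
    ring
  have hgain : regLL A C Pstar < regLL A C M := by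
    rw [regLL, regLL]
    have : bernLL A M - bernLL A Pstar - C * (M.trace - Pstar.trace) > 0 := by
      rw [hbdiff, htrace, hsumv]
      ring_nf
      ring_nf at hineq
      nlinarith
    linarith
  exact absurd (hmax M hfeasM) (not_le.mpr hgain)
end
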